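/- Suppose every ergodic T-invariant Borel probability measure of a topological dynamical system (X, T) is rigid along the same sequence (t_n). Then every T-invariant Borel probability measure is rigid along (t_n). -/

import Mathlib

open MeasureTheory Filter Topology ProbabilityTheory
open scoped ENNReal
set_option maxHeartbeats 1000000
set_option synthInstance.maxHeartbeats 1000000

section Aux
variable {X : Type*} [MeasurableSpace X]

def invSigma (T : X → X) : MeasurableSpace X where
  MeasurableSet' s := MeasurableSet s ∧ T ⁻¹' s = s
  measurableSet_empty := ⟨MeasurableSet.empty, by simp⟩
  measurableSet_compl s hs := ⟨hs.1.compl, by rw [Set.preimage_compl, hs.2]⟩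
  measurableSet_iUnion f hf := ⟨MeasurableSet.iUnion fun i => (hf i).1, by
    simp only [Set.preimage_iUnion]
    exact Set.iUnion_congr fun i => (hf i).2⟩

theorem invSigma_le (T : X → X) : invSigma T ≤ ‹MeasurableSpace X› := fun _ hs => hs.1

/-- The Koopman operator on `L²`. -/
noncomputable def koop (T : X → X) {μ : Measure X} (hμT : MeasurePreserving T μ μ) :
    Lp ℝ 2 μ →L[ℝ] Lp ℝ 2 μ :=
  LinearMap.mkContinuous
    { toFun := fun g => Lp.compMeasurePreserving T hμT g
      map_add' := fun g h => by simp [map_add]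
      map_smul' := fun c g => by
        refine Lp.ext ?_
        filter_upwards [Lp.coeFn_compMeasurePreserving (c • g) hμT,
          Lp.coeFn_compMeasurePreserving g hμT,
          hμT.quasiMeasurePreserving.ae_eq_comp (Lp.coeFn_smul c g),
          Lp.coeFn_smul c (Lp.compMeasurePreserving T hμT g)] with x h1 h2 h3 h4
        simp only [RingHom.id_apply]
        rw [h1, h4]
        simp only [Function.comp_apply, Pi.smul_apply, smul_eq_mul] at h3 ⊢
        rw [h3, h2]
        rfl }
    1 (fun g => by
      simp only [LinearMap.coe_mk, AddHom.coe_mk, one_mul]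
      exact le_of_eq (Lp.norm_compMeasurePreserving g hμT))

theorem koop_norm_le (T : X → X) {μ : Measure X} (hμT : MeasurePreserving T μ μ) :
    ‖koop T hμT‖ ≤ 1 :=
  LinearMap.mkContinuous_norm_le _ zero_le_one _

theorem koop_coeFn (T : X → X) {μ : Measure X} (hμT : MeasurePreserving T μ μ) (g : Lp ℝ 2 μ) :
    (koop T hμT g : X → ℝ) =ᵐ[μ] (g : X → ℝ) ∘ T :=
  Lp.coeFn_compMeasurePreserving g hμT

theorem koop_iterate (T : X → X) {μ : Measure X} (hμT : MeasurePreserving T μ μ) (n : ℕ)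
    (g : Lp ℝ 2 μ) : ((⇑(koop T hμT))^[n] g : X → ℝ) =ᵐ[μ] (g : X → ℝ) ∘ T^[n] := by
  induction n generalizing g with
  | zero => simp
  | succ n ih =>
    rw [Function.iterate_succ_apply]
    refine (ih (koop T hμT g)).trans ?_
    have h1 : ((koop T hμT g : X → ℝ) ∘ T^[n]) =ᵐ[μ] ((g : X → ℝ) ∘ T) ∘ T^[n] :=
      (hμT.iterate n).quasiMeasurePreserving.ae_eq_comp (koop_coeFn T hμT g)
    refine h1.trans (Eventually.of_forall fun x => ?_)
    simp only [Function.comp_apply, Function.iterate_succ_apply' T n x]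


variable {T : X → X} {μ : Measure X} [IsProbabilityMeasure μ]

theorem sigmaFiniteTrim (T : X → X) (μ : Measure X) [IsProbabilityMeasure μ] :
    SigmaFinite (μ.trim (invSigma_le T)) := by
  haveI : IsFiniteMeasure (μ.trim (invSigma_le T)) := by
    constructor
    rw [trim_measurableSet_eq (invSigma_le T) MeasurableSet.univ]
    exact measure_lt_top μ _
  infer_instance

theorem condexp_comp_T (hTm : Measurable T) (hμT : MeasurePreserving T μ μ) {f : X → ℝ}
    (hf : Integrable f μ) : μ[f ∘ T | invSigma T] =ᵐ[μ] μ[f | invSigma T] := by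
  haveI := sigmaFiniteTrim T μ
  refine (ae_eq_condExp_of_forall_setIntegral_eq (invSigma_le T)
    ((hμT.integrable_comp hf.aestronglyMeasurable).2 hf)
    (fun s _ _ => integrable_condExp.integrableOn) (fun s hs _ => ?_)
    stronglyMeasurable_condExp.aestronglyMeasurable).symm
  rw [setIntegral_condExp (invSigma_le T) hf hs]
  have hmap : Measure.map T (μ.restrict (T ⁻¹' s)) = μ.restrict s :=
    (hμT.restrict_preimage hs.1).map_eq
  calc ∫ x in s, f x ∂μ = ∫ x, f x ∂(Measure.map T (μ.restrict (T ⁻¹' s))) := by rw [hmap]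
    _ = ∫ x, f (T x) ∂(μ.restrict (T ⁻¹' s)) :=
        integral_map hTm.aemeasurable (by rw [hmap]; exact hf.aestronglyMeasurable.restrict)
    _ = ∫ x in s, (f ∘ T) x ∂μ := by rw [hs.2]; rfl

variable [TopologicalSpace X] [PolishSpace X] [BorelSpace X]

theorem condexpKernel_int {s : Set X} (hs : MeasurableSet s) :
    ∫ ω, (condExpKernel μ (invSigma T) ω s).toReal ∂μ = (μ s).toReal := by
  haveI := sigmaFiniteTrim T μ
  rw [integral_congr_ae (by exact condExpKernel_ae_eq_condExp (invSigma_le T) hs :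
      (fun ω => (condExpKernel μ (invSigma T) ω s).toReal) =ᵐ[μ] _),
    integral_condExp (invSigma_le T)]
  exact integral_indicator_one hs

theorem condexpKernel_null {S : Set X} (hS : μ S = 0) :
    ∀ᵐ ω ∂μ, condExpKernel μ (invSigma T) ω S = 0 := by
  obtain ⟨S', hSS', hS'm, hS'0⟩ := exists_measurable_superset_of_null hS
  have hint : ∫ ω, (condExpKernel μ (invSigma T) ω S').toReal ∂μ = 0 := by
    rw [condexpKernel_int hS'm, hS'0, ENNReal.toReal_zero]
  have h0 : (fun ω => (condExpKernel μ (invSigma T) ω S').toReal) =ᵐ[μ] 0 :=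
    (integral_eq_zero_iff_of_nonneg (fun ω => ENNReal.toReal_nonneg)
      (integrable_toReal_condExpKernel hS'm)).1 hint
  filter_upwards [h0] with ω hω
  have hfin : condExpKernel μ (invSigma T) ω S' ≠ ⊤ := by
    haveI : IsProbabilityMeasure (condExpKernel μ (invSigma T) ω) :=
      IsMarkovKernel.isProbabilityMeasure ω
    exact measure_ne_top _ _
  have : condExpKernel μ (invSigma T) ω S' = 0 := by
    simpa [ENNReal.toReal_eq_zero_iff, hfin] using hω
  exact le_antisymm (le_trans (measure_mono hSS') this.le) zero_le

theorem condexpKernel_ae {p : X → Prop} (hp : ∀ᵐ x ∂μ, p x) :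
    ∀ᵐ ω ∂μ, ∀ᵐ x ∂(condExpKernel μ (invSigma T) ω), p x := by
  filter_upwards [condexpKernel_null (T := T) hp] with ω hω
  exact hω

theorem condexpKernel_invSet {B : Set X} (hB : MeasurableSet[invSigma T] B) :
    ∀ᵐ ω ∂μ, condExpKernel μ (invSigma T) ω B = 0 ∨ condExpKernel μ (invSigma T) ω B = 1 := by
  haveI := sigmaFiniteTrim T μ
  have h1 : (fun ω => (condExpKernel μ (invSigma T) ω B).toReal) =ᵐ[μ]
      μ[B.indicator (fun _ => (1:ℝ)) | invSigma T] :=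
    condExpKernel_ae_eq_condExp (invSigma_le T) (invSigma_le T B hB)
  have h2 : μ[B.indicator (fun _ => (1:ℝ)) | invSigma T] = B.indicator (fun _ => (1:ℝ)) :=
    condExp_of_stronglyMeasurable (invSigma_le T)
      (StronglyMeasurable.indicator stronglyMeasurable_const hB)
      ((integrable_const (1:ℝ)).indicator (invSigma_le T B hB))
  rw [h2] at h1
  filter_upwards [h1] with ω hω
  haveI : IsProbabilityMeasure (condExpKernel μ (invSigma T) ω) :=
    IsMarkovKernel.isProbabilityMeasure ω
  have hfin : condExpKernel μ (invSigma T) ω B ≠ ⊤ := measure_ne_top _ _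
  by_cases hω' : ω ∈ B
  · right
    rw [Set.indicator_of_mem hω'] at hω
    have := ENNReal.toReal_eq_one_iff (condExpKernel μ (invSigma T) ω B)
    exact this.1 hω
  · left
    rw [Set.indicator_of_notMem hω'] at hω
    simpa [ENNReal.toReal_eq_zero_iff, hfin] using hω

theorem condexpKernel_preimage (hTm : Measurable T) (hμT : MeasurePreserving T μ μ)
    {s : Set X} (hs : MeasurableSet s) :
    ∀ᵐ ω ∂μ, condExpKernel μ (invSigma T) ω (T ⁻¹' s) = condExpKernel μ (invSigma T) ω s := by
  haveI := sigmaFiniteTrim T μ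
  have h1 : (fun ω => (condExpKernel μ (invSigma T) ω (T ⁻¹' s)).toReal) =ᵐ[μ]
      μ[(T ⁻¹' s).indicator (fun _ => (1:ℝ)) | invSigma T] :=
    condExpKernel_ae_eq_condExp (invSigma_le T) (hTm hs)
  have heq : (T ⁻¹' s).indicator (fun _ => (1:ℝ)) = (s.indicator (fun _ => (1:ℝ))) ∘ T := by
    funext x
    by_cases hx : T x ∈ s <;> simp [Set.indicator, hx]
  have h2 : μ[(T ⁻¹' s).indicator (fun _ => (1:ℝ)) | invSigma T] =ᵐ[μ]
      μ[s.indicator (fun _ => (1:ℝ)) | invSigma T] := by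
    rw [heq]
    exact condexp_comp_T hTm hμT ((integrable_const (1:ℝ)).indicator hs)
  have h3 : (fun ω => (condExpKernel μ (invSigma T) ω s).toReal) =ᵐ[μ]
      μ[s.indicator (fun _ => (1:ℝ)) | invSigma T] :=
    condExpKernel_ae_eq_condExp (invSigma_le T) hs
  filter_upwards [h1, h2, h3] with ω hω1 hω2 hω3
  haveI : IsProbabilityMeasure (condExpKernel μ (invSigma T) ω) :=
    IsMarkovKernel.isProbabilityMeasure ω
  have := hω1.trans (hω2.trans hω3.symm)
  exact (ENNReal.toReal_eq_toReal_iff' (measure_ne_top _ _) (measure_ne_top _ _)).1 this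


theorem coeFn_finsetSum {ι : Type*} (t : Finset ι) (F : ι → Lp ℝ 2 μ) :
    ⇑(∑ i ∈ t, F i) =ᵐ[μ] fun x => ∑ i ∈ t, (F i : X → ℝ) x := by
  classical
  induction t using Finset.induction_on with
  | empty =>
    simp only [Finset.sum_empty]
    filter_upwards [Lp.coeFn_zero ℝ 2 μ] with x hx
    simpa using hx
  | @insert a t hnot ih =>
    rw [Finset.sum_insert hnot]
    filter_upwards [Lp.coeFn_add (F a) (∑ i ∈ t, F i), ih] with x h1 h2
    rw [h1]
    simp only [Pi.add_apply, h2]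
    rw [Finset.sum_insert hnot]

theorem birkhoff_mem_Icc {s : Set X} (N : ℕ) (x : X) :
    birkhoffAverage ℝ T (s.indicator fun _ => (1:ℝ)) N x ∈ Set.Icc (0:ℝ) 1 := by
  rcases Nat.eq_zero_or_pos N with hN | hN
  · subst hN; simp [birkhoffAverage, birkhoffSum]
  have hterm : ∀ y, s.indicator (fun _ => (1:ℝ)) y ∈ Set.Icc (0:ℝ) 1 := by
    intro y; by_cases hy : y ∈ s <;> simp [Set.indicator, hy]
  have hsum0 : 0 ≤ birkhoffSum T (s.indicator fun _ => (1:ℝ)) N x :=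
    Finset.sum_nonneg fun i _ => (hterm _).1
  have hsumN : birkhoffSum T (s.indicator fun _ => (1:ℝ)) N x ≤ N := by
    have := Finset.sum_le_sum (f := fun i => s.indicator (fun _ => (1:ℝ)) (T^[i] x))
      (g := fun _ => (1:ℝ)) (s := Finset.range N) (fun i _ => (hterm _).2)
    simpa [birkhoffSum] using this
  constructor
  · exact mul_nonneg (by positivity) hsum0
  · rw [birkhoffAverage, smul_eq_mul]
    have hNpos : (0:ℝ) < N := by exact_mod_cast hN
    rw [inv_mul_le_iff₀ hNpos, mul_one]
    exact hsumN

theorem perSet (hTm : Measurable T) (hμT : MeasurePreserving T μ μ) {s : Set X}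
    (hs : MeasurableSet s) :
    ∃ (φ : ℕ → ℕ) (g : X → ℝ) (h : X → ℝ≥0∞),
      Measurable g ∧ (∀ x, g x ∈ Set.Icc (0:ℝ) 1) ∧ Measurable h ∧ (∀ x, h (T x) = h x) ∧
      (∀ x, h x ≤ 1) ∧ (∀ k, 1 ≤ φ k) ∧
      (∀ᵐ x ∂μ, Tendsto (fun k => birkhoffAverage ℝ T (s.indicator fun _ => (1:ℝ)) (φ k) x)
        atTop (𝓝 (g x))) ∧
      (∀ᵐ x ∂μ, h x = ENNReal.ofReal (g x)) := by
  classical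
  set f0 : X → ℝ := s.indicator fun _ => (1:ℝ) with hf0
  set xs : Lp ℝ 2 μ := indicatorConstLp 2 hs (measure_ne_top μ s) (1:ℝ) with hxsdef
  have hxs : ⇑xs =ᵐ[μ] f0 := indicatorConstLp_coeFn
  set K := koop T hμT with hK
  have hten := ContinuousLinearMap.tendsto_birkhoffAverage_orthogonalProjection K
    (koop_norm_le T hμT) xs
  set L : Lp ℝ 2 μ := ↑((K.eqLocus (1 : Lp ℝ 2 μ →L[ℝ] Lp ℝ 2 μ)).orthogonalProjectionOnto xs) with hLdef
  have hKL : K L = L := ((K.eqLocus (1 : Lp ℝ 2 μ →L[ℝ] Lp ℝ 2 μ)).orthogonalProjectionOnto xs).2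
  -- relate Lp Birkhoff averages to pointwise ones
  have hbA : ∀ N, ⇑(birkhoffAverage ℝ (⇑K) id N xs) =ᵐ[μ] birkhoffAverage ℝ T f0 N := by
    intro N
    have hterm : ∀ k, ((⇑K)^[k] xs : X → ℝ) =ᵐ[μ] f0 ∘ T^[k] := fun k =>
      (koop_iterate T hμT k xs).trans ((hμT.iterate k).quasiMeasurePreserving.ae_eq_comp hxs)
    have hsum : ⇑(birkhoffSum (⇑K) id N xs) =ᵐ[μ] birkhoffSum T f0 N := by
      have h1 : birkhoffSum (⇑K) id N xs = ∑ k ∈ Finset.range N, (⇑K)^[k] xs := rfl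
      rw [h1]
      refine (coeFn_finsetSum _ _).trans ?_
      have : ∀ᵐ x ∂μ, ∀ k, ((⇑K)^[k] xs : X → ℝ) x = (f0 ∘ T^[k]) x := ae_all_iff.2 hterm
      filter_upwards [this] with x hx
      simp only [birkhoffSum]
      exact Finset.sum_congr rfl fun k _ => hx k
    have h2 : birkhoffAverage ℝ (⇑K) id N xs = (N:ℝ)⁻¹ • birkhoffSum (⇑K) id N xs := rfl
    rw [h2]
    filter_upwards [Lp.coeFn_smul ((N:ℝ)⁻¹) (birkhoffSum (⇑K) id N xs), hsum] with x h3 h4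
    rw [h3]
    simp only [Pi.smul_apply, h4, birkhoffAverage]
  -- L² convergence to eLpNorm convergence
  have hnorm : Tendsto (fun N => ‖birkhoffAverage ℝ (⇑K) id N xs - L‖) atTop (𝓝 0) :=
    tendsto_iff_norm_sub_tendsto_zero.1 hten
  have heLp : Tendsto (fun N => eLpNorm (⇑(birkhoffAverage ℝ (⇑K) id N xs) - ⇑L) 2 μ)
      atTop (𝓝 0) := by
    have hne : ∀ N, eLpNorm (⇑(birkhoffAverage ℝ (⇑K) id N xs) - ⇑L) 2 μ ≠ ⊤ := fun N => by
      rw [eLpNorm_congr_ae (Lp.coeFn_sub (birkhoffAverage ℝ (⇑K) id N xs) L).symm]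
      exact Lp.eLpNorm_ne_top _
    rw [← ENNReal.tendsto_toReal_iff hne ENNReal.zero_ne_top]
    rw [ENNReal.toReal_zero]
    refine hnorm.congr fun N => ?_
    rw [Lp.norm_def, eLpNorm_congr_ae (Lp.coeFn_sub (birkhoffAverage ℝ (⇑K) id N xs) L)]
  have hTIM : TendstoInMeasure μ (fun N => ⇑(birkhoffAverage ℝ (⇑K) id N xs)) atTop ⇑L :=
    tendstoInMeasure_of_tendsto_eLpNorm (by norm_num) (fun N => Lp.aestronglyMeasurable _)
      (Lp.aestronglyMeasurable L) heLp
  obtain ⟨φ, hφmono, hφae⟩ := hTIM.exists_seq_tendsto_ae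
  set ψ : ℕ → ℕ := fun k => φ (k + 1) with hψdef
  have hψ1 : ∀ k, 1 ≤ ψ k := fun k => le_trans (Nat.succ_le_succ (Nat.zero_le k))
    (hφmono.le_apply)
  have hconvL : ∀ᵐ x ∂μ, Tendsto (fun k => birkhoffAverage ℝ T f0 (ψ k) x) atTop (𝓝 (⇑L x)) := by
    filter_upwards [hφae, ae_all_iff.2 fun N => hbA N] with x hx1 hx2
    have h1 : Tendsto (fun k => ⇑(birkhoffAverage ℝ (⇑K) id (φ k) xs) x) atTop (𝓝 (⇑L x)) := hx1
    have h2 : Tendsto (fun k => ⇑(birkhoffAverage ℝ (⇑K) id (ψ k) xs) x) atTop (𝓝 (⇑L x)) :=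
      h1.comp (tendsto_add_atTop_nat 1)
    refine h2.congr fun k => ?_
    exact hx2 (ψ k)
  have hLicc : ∀ᵐ x ∂μ, ⇑L x ∈ Set.Icc (0:ℝ) 1 := by
    filter_upwards [hconvL] with x hx
    exact isClosed_Icc.mem_of_tendsto hx (Eventually.of_forall fun k => birkhoff_mem_Icc _ _)
  set g : X → ℝ := fun x => max 0 (min 1 (⇑L x)) with hgdef
  have hgm : Measurable g :=
    Measurable.max measurable_const
      (Measurable.min measurable_const (Lp.stronglyMeasurable L).measurable)
  have hgicc : ∀ x, g x ∈ Set.Icc (0:ℝ) 1 :=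
    fun x => ⟨le_max_left _ _, max_le zero_le_one (min_le_left _ _)⟩
  have hgL : g =ᵐ[μ] ⇑L := by
    filter_upwards [hLicc] with x hx
    simp only [hgdef]
    rw [min_eq_right hx.2, max_eq_right hx.1]
  have hconv : ∀ᵐ x ∂μ, Tendsto (fun k => birkhoffAverage ℝ T f0 (ψ k) x) atTop (𝓝 (g x)) := by
    filter_upwards [hconvL, hgL] with x h1 h2
    rw [h2]; exact h1
  have hLT : (⇑L) ∘ T =ᵐ[μ] ⇑L := by
    have := koop_coeFn T hμT L
    rw [hKL] at this
    exact this.symm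
  have hgT : g ∘ T =ᵐ[μ] g := by
    filter_upwards [hLT] with x hx
    simp only [Function.comp_apply, hgdef]
    rw [show (⇑L) (T x) = ⇑L x from hx]
  have hgiter : ∀ n, g ∘ T^[n] =ᵐ[μ] g := by
    intro n
    induction n with
    | zero => simp
    | succ n ih =>
      have h1 : (g ∘ T^[n]) ∘ T =ᵐ[μ] g ∘ T :=
        hμT.quasiMeasurePreserving.ae_eq_comp ih
      have h2 : g ∘ T^[n + 1] = (g ∘ T^[n]) ∘ T := by
        funext x
        simp [Function.comp_apply, Function.iterate_succ_apply]
      rw [h2]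
      exact h1.trans hgT
  set h : X → ℝ≥0∞ := fun x => limsup (fun n => ENNReal.ofReal (g (T^[n] x))) atTop with hhdef
  have hhm : Measurable h :=
    Measurable.limsup fun n => ENNReal.measurable_ofReal.comp (hgm.comp (hTm.iterate n))
  have hhT : ∀ x, h (T x) = h x := by
    intro x
    simp only [hhdef]
    have : (fun n => ENNReal.ofReal (g (T^[n] (T x)))) =
        fun n => ENNReal.ofReal (g (T^[n + 1] x)) := by
      funext n; rw [← Function.iterate_succ_apply]
    rw [this]
    exact limsup_nat_add (fun n => ENNReal.ofReal (g (T^[n] x))) 1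
  have hh1 : ∀ x, h x ≤ 1 := by
    intro x
    refine limsup_le_of_le (by isBoundedDefault) (Eventually.of_forall fun n => ?_)
    exact ENNReal.ofReal_le_one.2 (hgicc _).2
  have hhg : ∀ᵐ x ∂μ, h x = ENNReal.ofReal (g x) := by
    filter_upwards [ae_all_iff.2 hgiter] with x hx
    simp only [hhdef]
    have : (fun n => ENNReal.ofReal (g (T^[n] x))) = fun _ => ENNReal.ofReal (g x) := by
      funext n; rw [show g (T^[n] x) = g x from hx n]
    rw [this, limsup_const]
  exact ⟨ψ, g, h, hgm, hgicc, hhm, hhT, hh1, hψ1, hconv, hhg⟩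

theorem exists_piSystem (X : Type*) [MeasurableSpace X] [TopologicalSpace X]
    [SecondCountableTopology X] [BorelSpace X] :
    ∃ P : Set (Set X), P.Countable ∧ IsPiSystem P ∧ (∀ s ∈ P, MeasurableSet s) ∧
      ‹MeasurableSpace X› = MeasurableSpace.generateFrom P := by
  obtain ⟨b, hbc, -, hbb⟩ := TopologicalSpace.exists_countable_basis X
  set e0 : ℕ → Set X := Set.enumerateCountable hbc Set.univ with he0
  set e : ℕ → Set X := fun n => interior (e0 n) with he
  have hbe : b ⊆ Set.range e := by
    intro s hsb
    obtain ⟨n, hn⟩ := Set.subset_range_enumerate hbc Set.univ hsb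
    refine ⟨n, ?_⟩
    show interior (e0 n) = s
    rw [show e0 n = s from hn]
    exact interior_eq_iff_isOpen.2 (hbb.isOpen hsb)
  set P : Set (Set X) := Set.range (fun F : Finset ℕ => ⋂ i ∈ F, e i) with hP
  have hPc : P.Countable := Set.countable_range _
  have hPpi : IsPiSystem P := by
    rintro s ⟨F, rfl⟩ t ⟨G, rfl⟩ -
    refine ⟨F ∪ G, ?_⟩
    ext x
    simp only [Set.mem_iInter, Finset.mem_union, Set.mem_inter_iff]
    constructor
    · intro hx
      exact ⟨fun i hi => hx i (Or.inl hi), fun i hi => hx i (Or.inr hi)⟩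
    · rintro ⟨h1, h2⟩ i (hi | hi)
      · exact h1 i hi
      · exact h2 i hi
  have hPm : ∀ s ∈ P, MeasurableSet s := by
    rintro s ⟨F, rfl⟩
    exact MeasurableSet.biInter F.countable_toSet fun i _ => isOpen_interior.measurableSet
  refine ⟨P, hPc, hPpi, hPm, le_antisymm ?_ (MeasurableSpace.generateFrom_le hPm)⟩
  have h1 : ‹MeasurableSpace X› = MeasurableSpace.generateFrom b := by
    rw [BorelSpace.measurable_eq (α := X), hbb.borel_eq_generateFrom]
  rw [h1]
  refine MeasurableSpace.generateFrom_le fun s hsb => ?_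
  obtain ⟨n, hn⟩ := hbe hsb
  have : s = ⋂ i ∈ ({n} : Finset ℕ), e i := by simp [← hn]
  rw [this]
  exact MeasurableSpace.measurableSet_generateFrom ⟨({n} : Finset ℕ), rfl⟩

theorem ergodic_decomposition (hTm : Measurable T) (hμT : MeasurePreserving T μ μ) :
    ∃ κ : X → Measure X,
      (∀ᵐ ω ∂μ, IsProbabilityMeasure (κ ω) ∧ Ergodic T (κ ω)) ∧
      ∀ s : Set X, MeasurableSet s →
        (AEStronglyMeasurable (fun ω => (κ ω s).toReal) μ ∧
          ∫ ω, (κ ω s).toReal ∂μ = (μ s).toReal) := by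
  classical
  refine ⟨fun ω => condExpKernel μ (invSigma T) ω, ?_, fun s hs => ?_⟩
  swap
  · refine ⟨?_, condexpKernel_int hs⟩
    exact ((measurable_condExpKernel (μ := μ) hs).mono (invSigma_le T)
      le_rfl).ennreal_toReal.aestronglyMeasurable
  obtain ⟨P, hPc, hPpi, hPm, hPgen⟩ := exists_piSystem X
  have hper := fun (s : Set X) (hs : s ∈ P) => perSet hTm hμT (hPm s hs)
  choose φ g h hgm hgicc hhm hhT hh1 hφ1 hconv hhg using hper
  set Qset : Set ℝ≥0∞ := Set.range (fun q : ℚ => ENNReal.ofReal q) with hQdef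
  have hQc : Qset.Countable := Set.countable_range _
  have hBq : ∀ (s : Set X) (hs : s ∈ P) (q : ℝ≥0∞),
      MeasurableSet[invSigma T] {x | h s hs x ≤ q} := by
    intro s hs q
    refine ⟨measurableSet_le (hhm s hs) measurable_const, ?_⟩
    ext x
    simp only [Set.mem_preimage, Set.mem_setOf_eq]
    rw [hhT s hs x]
  have E1 : ∀ᵐ ω ∂μ, ∀ s ∈ P,
      condExpKernel μ (invSigma T) ω (T ⁻¹' s) = condExpKernel μ (invSigma T) ω s :=
    (ae_ball_iff hPc).2 fun s hs => condexpKernel_preimage hTm hμT (hPm s hs)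
  have E2 : ∀ᵐ ω ∂μ, ∀ s (hs : s ∈ P), ∀ᵐ x ∂(condExpKernel μ (invSigma T) ω),
      Tendsto (fun k => birkhoffAverage ℝ T (s.indicator fun _ => (1:ℝ)) (φ s hs k) x)
        atTop (𝓝 (g s hs x)) :=
    (ae_ball_iff hPc).2 fun s hs => condexpKernel_ae (hconv s hs)
  have E3 : ∀ᵐ ω ∂μ, ∀ s (hs : s ∈ P), ∀ᵐ x ∂(condExpKernel μ (invSigma T) ω),
      h s hs x = ENNReal.ofReal (g s hs x) :=
    (ae_ball_iff hPc).2 fun s hs => condexpKernel_ae (hhg s hs)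
  have E4 : ∀ᵐ ω ∂μ, ∀ s (hs : s ∈ P), ∀ q ∈ Qset,
      condExpKernel μ (invSigma T) ω {x | h s hs x ≤ q} = 0 ∨
        condExpKernel μ (invSigma T) ω {x | h s hs x ≤ q} = 1 :=
    (ae_ball_iff hPc).2 fun s hs =>
      (ae_ball_iff hQc).2 fun q _ => condexpKernel_invSet (hBq s hs q)
  filter_upwards [E1, E2, E3, E4] with ω h1 h2 h3 h4
  set ν := condExpKernel μ (invSigma T) ω with hνdef
  haveI hνp : IsProbabilityMeasure ν := IsMarkovKernel.isProbabilityMeasure ω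
  refine ⟨hνp, ?_⟩
  have hν : MeasurePreserving T ν ν := by
    refine ⟨hTm, ?_⟩
    haveI : IsProbabilityMeasure (Measure.map T ν) := Measure.isProbabilityMeasure_map hTm.aemeasurable
    refine ext_of_generate_finite P hPgen hPpi (fun s hs => ?_) (by simp)
    rw [Measure.map_apply hTm (hPm s hs)]
    exact h1 s hs
  refine ⟨hν, ⟨fun B hB hTB => ?_⟩⟩
  -- factorization
  have hfact : ∀ s (hs : s ∈ P), ν (s ∩ B) = ν s * ν B := by
    intro s hs
    -- constant value of g on ν
    have hgr : ∃ r : ℝ, (∀ᵐ x ∂ν, g s hs x = r) := by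
      have hν3 := h3 s hs
      have hν4 := h4 s hs
      set S : Set ℝ≥0∞ := {q | q ∈ Qset ∧ ν {x | h s hs x ≤ q} = 1} with hSdef
      have h1S : (1:ℝ≥0∞) ∈ S := by
        constructor
        · exact ⟨1, by simp⟩
        · have : {x | h s hs x ≤ 1} = Set.univ := Set.eq_univ_of_forall fun x => hh1 s hs x
          rw [this, measure_univ]
      set c := sInf S with hcdef
      have hc1 : c ≤ 1 := sInf_le h1S
      have hctop : c ≠ ⊤ := (lt_of_le_of_lt hc1 ENNReal.one_lt_top).ne
      have hex : ∀ n : ℕ, ∃ q ∈ S, q < c + (n:ℝ≥0∞)⁻¹ := by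
        intro n
        refine sInf_lt_iff.1 ?_
        rw [← hcdef]
        exact ENNReal.lt_add_right hctop (ENNReal.inv_ne_zero.2 (ENNReal.natCast_ne_top n))
      choose qn hqnS hqnlt using hex
      have hAm : ∀ n, MeasurableSet {x | h s hs x ≤ qn n} := fun n =>
        measurableSet_le (hhm s hs) measurable_const
      have hA1 : ν (⋂ n, {x | h s hs x ≤ qn n}) = 1 := by
        rw [← prob_compl_eq_zero_iff (MeasurableSet.iInter hAm), Set.compl_iInter]
        exact measure_iUnion_null fun n => (prob_compl_eq_zero_iff (hAm n)).2 (hqnS n).2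
      have hsub : (⋂ n, {x | h s hs x ≤ qn n}) ⊆ {x | h s hs x ≤ c} := by
        intro x hx
        simp only [Set.mem_iInter, Set.mem_setOf_eq] at hx ⊢
        refine ENNReal.le_of_forall_pos_le_add fun ε hε _ => ?_
        obtain ⟨n, hn⟩ := ENNReal.exists_inv_nat_lt
          (show ((ε:ℝ≥0∞)) ≠ 0 from ENNReal.coe_ne_zero.2 hε.ne')
        exact le_trans (hx n) (le_trans (hqnlt n).le (add_le_add_right hn.le c))
      have hstep1 : ν {x | h s hs x ≤ c} = 1 := by
        have hmono : (1:ℝ≥0∞) ≤ ν {x | h s hs x ≤ c} := by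
          rw [← hA1]
          exact measure_mono hsub
        exact le_antisymm prob_le_one hmono
      have hstep2 : ν {x | h s hs x < c} = 0 := by
        have hsub2 : {x | h s hs x < c} ⊆
            ⋃ q : ℚ, {x | h s hs x ≤ ENNReal.ofReal q ∧ ENNReal.ofReal q < c} := by
          intro x hx
          obtain ⟨q, _, hq1, hq2⟩ := ENNReal.lt_iff_exists_rat_btwn.1 hx
          exact Set.mem_iUnion_of_mem q ⟨hq1.le, hq2⟩
        refine measure_mono_null hsub2 (measure_iUnion_null fun q => ?_)
        by_cases hqc : ENNReal.ofReal q < c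
        · rcases hν4 (ENNReal.ofReal q) (Set.mem_range_self q) with h0 | h0
          · exact measure_mono_null (fun x hx => hx.1) h0
          · have hmem : ENNReal.ofReal (q:ℝ) ∈ S := ⟨Set.mem_range_self q, h0⟩
            have hle : c ≤ ENNReal.ofReal (q:ℝ) := by
              rw [hcdef]
              exact sInf_le hmem
            exact absurd hle (not_le.2 hqc)
        · have hemp : {x | h s hs x ≤ ENNReal.ofReal q ∧ ENNReal.ofReal q < c} = ∅ :=
            Set.eq_empty_of_forall_notMem fun x hx => hqc hx.2
          rw [hemp]
          exact measure_empty
      have hconst : ∀ᵐ x ∂ν, h s hs x = c := by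
        rw [MeasureTheory.ae_iff]
        refine measure_mono_null (fun x hx => ?_)
          (measure_union_null hstep2 ((prob_compl_eq_zero_iff
            (measurableSet_le (hhm s hs) measurable_const)).2 hstep1))
        simp only [Set.mem_setOf_eq] at hx
        rcases lt_or_ge (h s hs x) c with hlt | hle
        · exact Or.inl hlt
        · refine Or.inr ?_
          simp only [Set.mem_compl_iff, Set.mem_setOf_eq, not_le]
          exact lt_of_le_of_ne hle (fun hcontra => hx hcontra.symm)
      refine ⟨c.toReal, ?_⟩
      filter_upwards [hν3, hconst] with x hx1 hx2
      have hcg : c = ENNReal.ofReal (g s hs x) := hx2.symm.trans hx1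
      rw [hcg, ENNReal.toReal_ofReal (hgicc s hs x).1]
    obtain ⟨r, hgr⟩ := hgr
    -- integral identity for invariant sets
    have hf0m : Measurable (s.indicator fun _ => (1:ℝ)) := measurable_const.indicator (hPm s hs)
    have hint : ∀ (C : Set X), MeasurableSet C → T ⁻¹' C = C →
        (ν (s ∩ C)).toReal = (ν C).toReal * r := by
      intro C hC hTC
      have hCk : ∀ k, T^[k] ⁻¹' C = C := by
        intro k
        induction k with
        | zero => simp
        | succ k ih => rw [Function.iterate_succ, Set.preimage_comp, ih, hTC]
      have hterm : ∀ k, ∫ x in C, (s.indicator fun _ => (1:ℝ)) (T^[k] x) ∂ν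
          = (ν (s ∩ C)).toReal := by
        intro k
        have hcomp : (fun x => (s.indicator fun _ => (1:ℝ)) (T^[k] x)) =
            (T^[k] ⁻¹' s).indicator fun _ => (1:ℝ) := by
          funext x
          by_cases hx : T^[k] x ∈ s <;> simp [Set.indicator, hx, Set.mem_preimage]
        have hpre : MeasurableSet (T^[k] ⁻¹' s) := (hTm.iterate k) (hPm s hs)
        rw [hcomp]
        calc ∫ x in C, (T^[k] ⁻¹' s).indicator (fun _ => (1:ℝ)) x ∂ν
            = ((ν.restrict C) (T^[k] ⁻¹' s)).toReal := integral_indicator_one hpre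
          _ = (ν (T^[k] ⁻¹' s ∩ C)).toReal := by rw [Measure.restrict_apply hpre]
          _ = (ν (T^[k] ⁻¹' (s ∩ C))).toReal := by
              rw [Set.preimage_inter, hCk k]
          _ = (ν (s ∩ C)).toReal := by
              rw [(hν.iterate k).measure_preimage ((hPm s hs).inter hC).nullMeasurableSet]
      have hintN : ∀ N, 1 ≤ N →
          ∫ x in C, birkhoffAverage ℝ T (s.indicator fun _ => (1:ℝ)) N x ∂ν
            = (ν (s ∩ C)).toReal := by
        intro N hN
        have hi : ∀ k, Integrable (fun x => (s.indicator fun _ => (1:ℝ)) (T^[k] x))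
            (ν.restrict C) := by
          intro k
          refine Integrable.mono' (integrable_const 1)
            ((hf0m.comp (hTm.iterate k)).aestronglyMeasurable)
            (Eventually.of_forall fun x => ?_)
          by_cases hx : T^[k] x ∈ s <;> simp [Set.indicator, hx]
        have h1 : ∫ x in C, birkhoffSum T (s.indicator fun _ => (1:ℝ)) N x ∂ν
            = ∑ k ∈ Finset.range N, ∫ x in C, (s.indicator fun _ => (1:ℝ)) (T^[k] x) ∂ν :=
          integral_finset_sum _ (fun k _ => hi k)
        have hN0 : (N:ℝ) ≠ 0 := Nat.cast_ne_zero.2 (Nat.one_le_iff_ne_zero.1 hN)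
        calc ∫ x in C, birkhoffAverage ℝ T (s.indicator fun _ => (1:ℝ)) N x ∂ν
            = (N:ℝ)⁻¹ • ∫ x in C, birkhoffSum T (s.indicator fun _ => (1:ℝ)) N x ∂ν := by
              rw [← integral_smul]
              rfl
          _ = (N:ℝ)⁻¹ * ((N:ℝ) * (ν (s ∩ C)).toReal) := by
              rw [h1, Finset.sum_congr rfl (fun k _ => hterm k), Finset.sum_const,
                Finset.card_range, nsmul_eq_mul, smul_eq_mul]
          _ = (ν (s ∩ C)).toReal := by
              rw [← mul_assoc, inv_mul_cancel₀ hN0, one_mul]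
      have hbam : ∀ N, Measurable (birkhoffAverage ℝ T (s.indicator fun _ => (1:ℝ)) N) := by
        intro N
        have hbs : Measurable (birkhoffSum T (s.indicator fun _ => (1:ℝ)) N) :=
          Finset.measurable_sum (Finset.range N) (fun k _ => hf0m.comp (hTm.iterate k))
        exact hbs.const_smul ((N:ℝ)⁻¹)
      have hDCT := tendsto_integral_of_dominated_convergence (μ := ν.restrict C)
        (F := fun k => birkhoffAverage ℝ T (s.indicator fun _ => (1:ℝ)) (φ s hs k))
        (f := fun _ => r) (bound := fun _ => (1:ℝ))
        (fun k => (hbam _).aestronglyMeasurable) (integrable_const 1)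
        (fun k => Eventually.of_forall fun x => by
          have hv := birkhoff_mem_Icc (T := T) (s := s) (φ s hs k) x
          rw [Real.norm_eq_abs, abs_of_nonneg hv.1]
          exact hv.2)
        (ae_restrict_of_ae (by
          filter_upwards [h2 s hs, hgr] with x hx1 hx2
          rw [hx2] at hx1
          exact hx1))
      have hlim : Tendsto (fun k =>
          ∫ x in C, birkhoffAverage ℝ T (s.indicator fun _ => (1:ℝ)) (φ s hs k) x ∂ν)
          atTop (𝓝 ((ν C).toReal * r)) := by
        have : ∫ (_ : X) in C, r ∂ν = (ν C).toReal * r := by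
          rw [integral_const, smul_eq_mul]; simp [Measure.real]
        rw [← this]
        exact hDCT
      exact tendsto_nhds_unique
        (Tendsto.congr (fun k => (hintN (φ s hs k) (hφ1 s hs k)).symm) tendsto_const_nhds) hlim
    have huniv := hint Set.univ MeasurableSet.univ (by simp)
    rw [Set.inter_univ] at huniv
    have hr : r = (ν s).toReal := by
      rw [huniv]; simp
    have hBc := hint B hB hTB
    rw [hr] at hBc
    have hne1 : ν (s ∩ B) ≠ ⊤ := measure_ne_top _ _
    have hne2 : ν s * ν B ≠ ⊤ := ENNReal.mul_ne_top (measure_ne_top _ _) (measure_ne_top _ _)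
    refine (ENNReal.toReal_eq_toReal_iff' hne1 hne2).1 ?_
    rw [ENNReal.toReal_mul, hBc, mul_comm]
  have hrestrict : ν.restrict B = ν B • ν := by
    refine ext_of_generate_finite P hPgen hPpi (fun s hs => ?_) ?_
    · rw [Measure.restrict_apply (hPm s hs), hfact s hs, Measure.smul_apply, smul_eq_mul,
        mul_comm]
    · rw [Measure.restrict_apply_univ, Measure.smul_apply, smul_eq_mul, measure_univ, mul_one]
  have hzero : ν B * ν Bᶜ = 0 := by
    have h1 : ν.restrict B Bᶜ = 0 := by
      rw [Measure.restrict_apply hB.compl, Set.compl_inter_self, measure_empty]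
    rw [hrestrict, Measure.smul_apply, smul_eq_mul] at h1
    exact h1
  rcases mul_eq_zero.1 hzero with h0 | h0
  · rw [Filter.eventuallyConst_set]
    right
    rw [MeasureTheory.ae_iff]
    simpa using h0
  · rw [Filter.eventuallyConst_set]
    left
    rw [MeasureTheory.ae_iff]
    simpa [Set.compl_def] using h0

end Aux

theorem stmt_16 {X : Type*} [MetricSpace X] [CompactSpace X] [MeasurableSpace X] [BorelSpace X]
    (T : X → X) (hT : Continuous T) (t : ℕ → ℕ) (ht : Tendsto t atTop atTop)
    (hrig : ∀ μ : Measure X, IsProbabilityMeasure μ → Ergodic T μ →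
      ∀ A : Set X, MeasurableSet A →
        Tendsto (fun n => μ (symmDiff (T^[t n] ⁻¹' A) A)) atTop (𝓝 0)) :
    ∀ μ : Measure X, IsProbabilityMeasure μ → MeasurePreserving T μ μ →
      ∀ A : Set X, MeasurableSet A →
        Tendsto (fun n => μ (symmDiff (T^[t n] ⁻¹' A) A)) atTop (𝓝 0) := by
  intro μ hμprob hμT A hA
  haveI := hμprob
  obtain ⟨κ, hae, hint⟩ := ergodic_decomposition (T := T) (μ := μ) hT.measurable hμT
  have hDn : ∀ n, MeasurableSet (symmDiff (T^[t n] ⁻¹' A) A) := fun n =>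
    MeasurableSet.symmDiff ((hT.measurable.iterate (t n)) hA) hA
  have hkey : ∀ᵐ ω ∂μ, Tendsto (fun n => (κ ω (symmDiff (T^[t n] ⁻¹' A) A)).toReal)
      atTop (𝓝 0) := by
    filter_upwards [hae] with ω hω
    obtain ⟨hp, he⟩ := hω
    have h1 := hrig (κ ω) hp he A hA
    have h2 : Tendsto (fun n => (κ ω (symmDiff (T^[t n] ⁻¹' A) A)).toReal) atTop
        (𝓝 ((0:ℝ≥0∞).toReal)) := (ENNReal.tendsto_toReal ENNReal.zero_ne_top).comp h1
    simpa using h2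
  have hbound : ∀ n, ∀ᵐ ω ∂μ, ‖(κ ω (symmDiff (T^[t n] ⁻¹' A) A)).toReal‖ ≤ 1 := by
    intro n
    filter_upwards [hae] with ω hω
    obtain ⟨hp, -⟩ := hω
    rw [Real.norm_eq_abs, abs_of_nonneg ENNReal.toReal_nonneg]
    have := ENNReal.toReal_mono (by simp) (prob_le_one
      (μ := κ ω) (s := symmDiff (T^[t n] ⁻¹' A) A))
    simpa using this
  have hDCT := tendsto_integral_of_dominated_convergence (μ := μ)
    (F := fun n ω => (κ ω (symmDiff (T^[t n] ⁻¹' A) A)).toReal) (f := fun _ => (0:ℝ))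
    (bound := fun _ => (1:ℝ)) (fun n => (hint _ (hDn n)).1) (integrable_const 1) hbound hkey
  have htr : Tendsto (fun n => (μ (symmDiff (T^[t n] ⁻¹' A) A)).toReal) atTop (𝓝 0) := by
    have h0 : ∫ (_ : X), (0:ℝ) ∂μ = 0 := integral_zero X ℝ
    rw [h0] at hDCT
    exact Tendsto.congr (fun n => (hint _ (hDn n)).2) hDCT
  have := (ENNReal.tendsto_toReal_iff (fun n => measure_ne_top μ _)
    (ENNReal.zero_ne_top) (x := 0)).1 (by simpa using htr)
  exact this
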